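/- arXiv:2411.05763 — 4 statements merged into one kernel-verified Lean document; each statement's English description precedes it below -/
import Mathlib

section
/- (Mutually exclusive active sets) Suppose P_{ℓ,i} < P*_i < P_{u,i} for all i and (θ*, λ*) is a KKT point of the constrained flow problem. Let P = Lθ* + P_L, I_ℓ = {i : P_i = P_{ℓ,i}}, I_u = {i : P_i = P_{u,i}}. Then I_ℓ = ∅ or I_u = ∅, i.e., no KKT point has one node at its upper limit and another node at its lower limit simultaneously. -/
open Matrix BigOperators

/-- **Mutually exclusive active sets.** Suppose `P_ℓ < P⋆ < P_u` componentwise and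
`(θ⋆, λ⋆)` is a KKT point of the constrained flow problem (primal feasibility,
dual feasibility, stationarity `M(P − P⋆) + K_I(λ_u − λ_ℓ) ∈ span 𝟙`, complementary
slackness) with `P = L θ⋆ + P_L`. Then the lower active set `{i | P i = P_ℓ i}` or the
upper active set `{i | P i = P_u i}` is empty. -/
theorem mutually_exclusive_active_sets (n : ℕ)
    (L : Matrix (Fin n) (Fin n) ℝ) (θ PL : Fin n → ℝ)
    (m sqk Pl Pu Pstar P lamL lamU : Fin n → ℝ)
    (hm : ∀ i, 0 < m i) (hsqk : ∀ i, 0 < sqk i)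
    (hP : P = L.mulVec θ + PL)
    (hset : ∀ i, Pl i < Pstar i ∧ Pstar i < Pu i)
    (hprim : ∀ i, Pl i ≤ P i ∧ P i ≤ Pu i)
    (hdual : ∀ i, 0 ≤ lamL i ∧ 0 ≤ lamU i)
    (hstat : ∃ c : ℝ, ∀ i, m i * (P i - Pstar i) + sqk i * (lamU i - lamL i) = c)
    (hcsl : ∀ i, lamL i * (Pl i - P i) = 0)
    (hcsu : ∀ i, lamU i * (P i - Pu i) = 0) :
    {i | P i = Pl i} = ∅ ∨ {i | P i = Pu i} = ∅ := by
  by_contra h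
  push_neg at h
  obtain ⟨h1, h2⟩ := h
  obtain ⟨i, hi⟩ := h1
  obtain ⟨j, hj⟩ := h2
  have hi' : P i = Pl i := hi
  have hj' : P j = Pu j := hj
  obtain ⟨c, hc⟩ := hstat
  -- at i: lamU i = 0 since P i = Pl i < Pu i
  have hiu : lamU i = 0 := by
    have h1 : P i - Pu i < 0 := by
      have := (hset i).1; have := (hset i).2; linarith [hi']
    have := hcsu i
    rcases mul_eq_zero.mp this with h | h
    · exact h
    · linarith
  have hci : c < 0 := by
    have := hc i
    rw [hiu] at this
    have hPi : P i - Pstar i < 0 := by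
      have := (hset i).1; linarith [hi']
    nlinarith [(hdual i).1, hm i, hsqk i]
  -- at j: lamL j = 0 since P j = Pu j > Pl j
  have hjl : lamL j = 0 := by
    have h1 : Pl j - P j < 0 := by
      have := (hset j).1; have := (hset j).2; linarith [hj']
    rcases mul_eq_zero.mp (hcsl j) with h | h
    · exact h
    · linarith
  have hcj : 0 < c := by
    have := hc j
    rw [hjl] at this
    have hPj : 0 < P j - Pstar j := by
      have := (hset j).2; linarith [hj']
    nlinarith [(hdual j).2, hm j, hsqk j]
  linarith
end

section
/- (Synchronous frequency formula) Suppose the system has converged to a KKT point: ω_s 𝟙_n = M(P* − P) − K_I(λ*_u − λ*_ℓ) for a scalar ω_s, with P = Lθ* + P_L. Then ω_s = (∑_{i∉I_u∪I_ℓ} P*_i + ∑_{i∈I_u} P_{u,i} + ∑_{i∈I_ℓ} P_{ℓ,i} − ∑_{i∈N} P_{L,i}) / (∑_{i∉I_u∪I_ℓ} m_i^{-1}), where I_ℓ, I_u are the active lower and upper constraint sets. -/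
open Matrix BigOperators Finset

/-- **Synchronous frequency formula.** At a converged KKT point with
`ω_s 𝟙 = M(P⋆ − P) − K_I(λ_u − λ_ℓ)`, power balance `∑ P = ∑ P_L`, and active sets
`I_u`, `I_ℓ` (where `P = P_u` resp. `P = P_ℓ` and off which the multipliers vanish),
the synchronous frequency is
`ω_s = (∑_{i∉I_u∪I_ℓ} P⋆_i + ∑_{i∈I_u} P_{u,i} + ∑_{i∈I_ℓ} P_{ℓ,i} − ∑_i P_{L,i}) /
(∑_{i∉I_u∪I_ℓ} m_i⁻¹)`. -/
theorem synchronous_frequency_formula (n : ℕ)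
    (Iu Il : Finset (Fin n)) (hdisj : Disjoint Iu Il) (hne : Iu ∪ Il ≠ Finset.univ)
    (m sqk P Pl Pu PL Pstar lamL lamU : Fin n → ℝ) (ωs : ℝ)
    (hm : ∀ i, 0 < m i)
    (hstat : ∀ i, ωs = m i * (Pstar i - P i) - sqk i * (lamU i - lamL i))
    (hbal : ∑ i, P i = ∑ i, PL i)
    (hslack : ∀ i, i ∉ Iu ∪ Il → lamL i = 0 ∧ lamU i = 0)
    (hu : ∀ i ∈ Iu, P i = Pu i) (hl : ∀ i ∈ Il, P i = Pl i) :
    ωs = ((∑ i ∈ (Iu ∪ Il)ᶜ, Pstar i) + (∑ i ∈ Iu, Pu i) + (∑ i ∈ Il, Pl i)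
            - ∑ i, PL i) / ∑ i ∈ (Iu ∪ Il)ᶜ, (m i)⁻¹ := by
  have hSpos : 0 < ∑ i ∈ (Iu ∪ Il)ᶜ, (m i)⁻¹ :=
    Finset.sum_pos (fun i _ => inv_pos.mpr (hm i))
      (by rwa [Finset.nonempty_iff_ne_empty, ne_eq, Finset.compl_eq_empty_iff])
  have hPc : ∀ i ∈ (Iu ∪ Il)ᶜ, P i = Pstar i - ωs * (m i)⁻¹ := by
    intro i hi
    have h := hstat i
    obtain ⟨h1, h2⟩ := hslack i (Finset.mem_compl.mp hi)
    rw [h1, h2] at h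
    have hmne := (hm i).ne'
    field_simp at h ⊢
    linarith
  have hsumc : ∑ i ∈ (Iu ∪ Il)ᶜ, P i
      = (∑ i ∈ (Iu ∪ Il)ᶜ, Pstar i) - ωs * ∑ i ∈ (Iu ∪ Il)ᶜ, (m i)⁻¹ := by
    rw [Finset.sum_congr rfl hPc, Finset.sum_sub_distrib, ← Finset.mul_sum]
  have hsplit : ∑ i, P i = (∑ i ∈ (Iu ∪ Il)ᶜ, P i) + ∑ i ∈ Iu ∪ Il, P i :=
    (Finset.sum_compl_add_sum (Iu ∪ Il) P).symm
  have hIuIl : ∑ i ∈ Iu ∪ Il, P i = (∑ i ∈ Iu, Pu i) + ∑ i ∈ Il, Pl i := by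
    rw [Finset.sum_union hdisj, Finset.sum_congr rfl hu, Finset.sum_congr rfl hl]
  rw [hsplit, hsumc, hIuIl] at hbal
  rw [eq_div_iff hSpos.ne']
  linarith
end

section
/- (Lower active set forces positive frequency) Suppose P_{ℓ,i} < P*_i < P_{u,i} for all i, and at a KKT point I_ℓ ≠ ∅ (some node at lower limit) and (by mutual exclusivity) I_u = ∅. Then the synchronous frequency satisfies ω_s = m_i(P*_i − P_{ℓ,i}) + √k_i λ*_{ℓ,i} > 0 for any i ∈ I_ℓ, and moreover ∑_i P_{L,i} < ∑_i P*_i. -/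
open Matrix BigOperators Finset

/-- **Lower active set forces positive frequency.** Under the setpoint assumption
`P_ℓ < P⋆ < P_u` and feasibility `∑ P_ℓ < ∑ P_L < ∑ P_u`, at a KKT point with
nonempty lower active set `I_ℓ` and empty upper active set (`P i < P_u i` for all `i`),
the synchronous frequency satisfies
`ω_s = m_i (P⋆_i − P_{ℓ,i}) + √k_i λ_{ℓ,i} > 0` for every `i ∈ I_ℓ`, and moreover
`∑ P_L < ∑ P⋆`. -/
theorem lower_active_set_positive_frequency (n : ℕ)
    (Il : Finset (Fin n)) (hIlne : Il.Nonempty)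
    (m sqk P Pl Pu PL Pstar lamL lamU : Fin n → ℝ) (ωs : ℝ)
    (hm : ∀ i, 0 < m i) (hsqk : ∀ i, 0 < sqk i)
    (hset : ∀ i, Pl i < Pstar i ∧ Pstar i < Pu i)
    (hfeas : (∑ i, Pl i < ∑ i, PL i) ∧ ∑ i, PL i < ∑ i, Pu i)
    (hIl : ∀ i, i ∈ Il ↔ P i = Pl i)
    (hIu : ∀ i, P i < Pu i)
    (hdual : ∀ i, 0 ≤ lamL i ∧ 0 ≤ lamU i)
    (hlamU : ∀ i, lamU i = 0)
    (hlamL : ∀ i, i ∉ Il → lamL i = 0)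
    (hstat : ∀ i, ωs = m i * (Pstar i - P i) + sqk i * (lamL i - lamU i))
    (hbal : ∑ i, P i = ∑ i, PL i) :
    (∀ i ∈ Il, ωs = m i * (Pstar i - Pl i) + sqk i * lamL i) ∧
    0 < ωs ∧ ∑ i, PL i < ∑ i, Pstar i := by
  have hform : ∀ i ∈ Il, ωs = m i * (Pstar i - Pl i) + sqk i * lamL i := by
    intro i hi
    have hP : P i = Pl i := (hIl i).mp hi
    have := hstat i
    rw [hP, hlamU i] at this
    simpa using this
  obtain ⟨j, hj⟩ := hIlne
  have hωpos : 0 < ωs := by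
    have h := hform j hj
    have h1 : 0 < m j * (Pstar j - Pl j) :=
      mul_pos (hm j) (sub_pos.mpr (hset j).1)
    have h2 : 0 ≤ sqk j * lamL j := mul_nonneg (hsqk j).le (hdual j).1
    linarith
  refine ⟨hform, hωpos, ?_⟩
  rw [← hbal]
  apply Finset.sum_lt_sum_of_nonempty ⟨j, Finset.mem_univ j⟩
  intro i _
  by_cases hi : i ∈ Il
  · rw [(hIl i).mp hi]; exact (hset i).1
  · have h := hstat i
    rw [hlamL i hi, hlamU i] at h
    simp at h
    have : 0 < m i * (Pstar i - P i) := by linarith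
    nlinarith [hm i]
end

section
/- (Upper active set forces negative frequency) Suppose P_{ℓ,i} < P*_i < P_{u,i} for all i, and at a KKT point I_u ≠ ∅ and I_ℓ = ∅. Then ω_s = m_i(P*_i − P_{u,i}) − √k_i λ*_{u,i} < 0 for any i ∈ I_u, and ∑_i P_{L,i} > ∑_i P*_i. -/
open Matrix BigOperators Finset

/-- **Upper active set forces negative frequency.** Under the setpoint assumption
`P_ℓ < P⋆ < P_u` and feasibility `∑ P_ℓ < ∑ P_L < ∑ P_u`, at a KKT point with
nonempty upper active set `I_u` and empty lower active set (`P_ℓ i < P i` for all `i`),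
the synchronous frequency satisfies
`ω_s = m_i (P⋆_i − P_{u,i}) − √k_i λ_{u,i} < 0` for every `i ∈ I_u`, and moreover
`∑ P_L > ∑ P⋆`. -/
theorem upper_active_set_negative_frequency (n : ℕ)
    (Iu : Finset (Fin n)) (hIune : Iu.Nonempty)
    (m sqk P Pl Pu PL Pstar lamL lamU : Fin n → ℝ) (ωs : ℝ)
    (hm : ∀ i, 0 < m i) (hsqk : ∀ i, 0 < sqk i)
    (hset : ∀ i, Pl i < Pstar i ∧ Pstar i < Pu i)
    (hfeas : (∑ i, Pl i < ∑ i, PL i) ∧ ∑ i, PL i < ∑ i, Pu i)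
    (hIu : ∀ i, i ∈ Iu ↔ P i = Pu i)
    (hIl : ∀ i, Pl i < P i)
    (hdual : ∀ i, 0 ≤ lamL i ∧ 0 ≤ lamU i)
    (hlamL : ∀ i, lamL i = 0)
    (hlamU : ∀ i, i ∉ Iu → lamU i = 0)
    (hstat : ∀ i, ωs = m i * (Pstar i - P i) + sqk i * (lamL i - lamU i))
    (hbal : ∑ i, P i = ∑ i, PL i) :
    (∀ i ∈ Iu, ωs = m i * (Pstar i - Pu i) - sqk i * lamU i) ∧
    ωs < 0 ∧ ∑ i, Pstar i < ∑ i, PL i := by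
  obtain ⟨j, hj⟩ := hIune
  have hform : ∀ i ∈ Iu, ωs = m i * (Pstar i - Pu i) - sqk i * lamU i := by
    intro i hi
    have := hstat i
    rw [hlamL i, (hIu i).mp hi] at this
    linarith
  have hωs : ωs < 0 := by
    have h := hform j hj
    have h1 : Pstar j < Pu j := (hset j).2
    have h2 : 0 ≤ lamU j := (hdual j).2
    nlinarith [hm j, hsqk j]
  refine ⟨hform, hωs, ?_⟩
  have hlt : ∀ i, Pstar i < P i := by
    intro i
    by_cases hi : i ∈ Iu
    · rw [(hIu i).mp hi]; exact (hset i).2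
    · have := hstat i
      rw [hlamL i, hlamU i hi] at this
      nlinarith [hm i]
  calc ∑ i, Pstar i < ∑ i, P i :=
        Finset.sum_lt_sum_of_nonempty ⟨j, Finset.mem_univ j⟩ (fun i _ => hlt i)
    _ = ∑ i, PL i := hbal
end
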